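/- Let n ≥ 3 be an integer with Fibonacci representation w, i.e., n = (w)_Fib. Then exactly one of the following holds: w = 101α for some binary word α, or w = 1001α for some binary word α, or w = 100α where α is empty or begins with 0. In each of the three cases, SB[n] = (1α)_Fib, where SB[n] is the length of the longest short border of the prefix of length n of the infinite Fibonacci word. -/

import Mathlib

open List Filter

/-- The Zimin pattern `Z_k` as a word over variables `0, 1, ..., k-1`
(`Z_0` is empty, `Z_{k+1} = Z_k · x_{k+1} · Z_k`). -/
def ziminWord : ℕ → List ℕ
  | 0 => []
  | k + 1 => ziminWord k ++ k :: ziminWord k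

/-- `w` is the image of the Zimin pattern `Z_k` under a non-erasing morphism. -/
def IsZiminImage {α : Type*} (k : ℕ) (w : List α) : Prop :=
  ∃ h : ℕ → List α, (∀ i, h i ≠ []) ∧ w = (ziminWord k).flatMap h

/-- The Zimin type of `w`: the maximum `k` such that `w` is an image of `Z_k`
under a non-erasing morphism (0 for the empty word). -/
noncomputable def ziminType {α : Type*} (w : List α) : ℕ :=
  sSup {k | IsZiminImage k w}

/-- The Zimin pattern `Z_k` embeds in `w`: some factor of `w` is an image of `Z_k`. -/
def ziminEmbeds {α : Type*} (k : ℕ) (w : List α) : Prop :=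
  ∃ u : List α, u <:+: w ∧ IsZiminImage k u

/-- Length of the longest border (proper prefix that is also a proper suffix) of `w`. -/
noncomputable def bordLen {α : Type*} (w : List α) : ℕ :=
  sSup {j | w.take j <:+ w ∧ j < w.length}

/-- Length of the longest short border (border of length `< |w|/2`) of `w`. -/
noncomputable def shortBordLen {α : Type*} (w : List α) : ℕ :=
  sSup {j | w.take j <:+ w ∧ 2 * j < w.length}

/-- The longest border of `w`. -/
noncomputable def bord {α : Type*} (w : List α) : List α := w.take (bordLen w)

/-- The longest short border of `w`. -/
noncomputable def shortBord {α : Type*} (w : List α) : List α := w.take (shortBordLen w)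

/-- The Fibonacci words over `Bool` (`a = false`, `b = true`), with
`fibWord 0 = F_0 = a`, `fibWord 1 = F_1 = F_0 F_{-1} = ab`, `F_{n} = F_{n-1} F_{n-2}`. -/
def fibWord : ℕ → List Bool
  | 0 => [false]
  | 1 => [false, true]
  | n + 2 => fibWord (n + 1) ++ fibWord n

/-- The Fibonacci numbers `Φ_n = |F_n|` (`Φ_0 = 1, Φ_1 = 2, Φ_2 = 3, ...`). -/
def Phi (n : ℕ) : ℕ := (fibWord n).length

/-- The infinite Fibonacci word `F_∞` (0-indexed letters). -/
def fibInf (i : ℕ) : Bool := (fibWord (i + 2)).getD i false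

/-- The prefix `F_∞[1..n]` of the infinite Fibonacci word. -/
def fibPrefix (n : ℕ) : List Bool := (List.range n).map fibInf


/-- The value `(w)_Fib` of a binary word in the Fibonacci numeration system
(most significant digit first; the last digit has weight `Φ_0`). -/
def fibVal : List Bool → ℕ
  | [] => 0
  | d :: rest => (if d then Phi rest.length else 0) + fibVal rest

/-- `w` is the Fibonacci representation of `n`: it starts with `1`, has no two
adjacent `1`s, and `(w)_Fib = n`. -/
def IsFibRep (n : ℕ) (w : List Bool) : Prop :=
  w.head? = some true ∧ w.Chain' (fun a b => ¬(a = true ∧ b = true)) ∧ fibVal w = n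

/-! ### Basic facts about `Phi` and `fibWord` -/

lemma fibWord_ne_nil (n : ℕ) : fibWord n ≠ [] := by
  match n with
  | 0 => simp [fibWord]
  | 1 => simp [fibWord]
  | n + 2 => simp [fibWord, fibWord_ne_nil (n+1)]

lemma Phi_zero : Phi 0 = 1 := rfl
lemma Phi_one : Phi 1 = 2 := rfl

lemma Phi_add (n : ℕ) : Phi (n + 2) = Phi (n + 1) + Phi n := by
  simp [Phi, fibWord]

lemma Phi_pos (n : ℕ) : 0 < Phi n := by
  simp [Phi, List.length_pos_iff, fibWord_ne_nil]

lemma Phi_lt_succ (n : ℕ) : Phi n < Phi (n + 1) := by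
  match n with
  | 0 => simp [Phi_zero, Phi_one]
  | n + 1 => rw [Phi_add]; have := Phi_pos n; omega

lemma Phi_strictMono : StrictMono Phi := strictMono_nat_of_lt_succ Phi_lt_succ

lemma Phi_mono : Monotone Phi := Phi_strictMono.monotone

lemma Phi_le_of_le {a b : ℕ} (h : a ≤ b) : Phi a ≤ Phi b := Phi_mono h

lemma two_le_Phi_succ (n : ℕ) : 2 ≤ Phi (n + 1) := by
  have := Phi_le_of_le (Nat.succ_le_succ (Nat.zero_le n)); simpa [Phi_one] using this

/-- `Phi (t-1) + Phi t = Phi (t+1)`, valid also at `t = 0` thanks to truncated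
subtraction (`Phi (0-1) = Phi 0 = 1`). -/
lemma Phi_pred_add (t : ℕ) : Phi (t - 1) + Phi t = Phi (t + 1) := by
  match t with
  | 0 => rfl
  | t + 1 => show Phi t + Phi (t+1) = Phi (t+2); rw [Phi_add]; omega

lemma fibWord_prefix_succ (n : ℕ) : fibWord n <+: fibWord (n + 1) := by
  match n with
  | 0 => exact ⟨[true], rfl⟩
  | n + 1 => exact ⟨fibWord n, rfl⟩

lemma fibWord_prefix {a b : ℕ} (h : a ≤ b) : fibWord a <+: fibWord b := by
  induction b with
  | zero => simpa [Nat.le_zero.mp h]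
  | succ b ih =>
    rcases Nat.lt_or_ge a (b+1) with h' | h'
    · exact (ih (by omega)).trans (fibWord_prefix_succ b)
    · have : a = b + 1 := by omega
      simp [this]

lemma succ_le_Phi (n : ℕ) : n + 1 ≤ Phi n := by
  induction n with
  | zero => simp [Phi_zero]
  | succ n ih => have := Phi_lt_succ n; omega

lemma fibInf_eq_getD {k i : ℕ} (h : i < Phi k) : fibInf i = (fibWord k).getD i false := by
  unfold fibInf
  rcases Nat.le_total k (i + 2) with hk | hk
  · obtain ⟨t, ht⟩ := fibWord_prefix hk
    rw [← ht, List.getD_append _ _ _ _ h]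
  · obtain ⟨t, ht⟩ := fibWord_prefix hk
    have hi : i < Phi (i + 2) := lt_of_lt_of_le (by omega) (succ_le_Phi (i+2))
    rw [← ht, List.getD_append _ _ _ _ hi]

lemma length_fibWord (n : ℕ) : (fibWord n).length = Phi n := rfl

/-- `F_{m+1} F_m` and `F_m F_{m+1}` agree except on the last two letters. -/
lemma fib_comm (m : ℕ) : ∀ i, i + 3 ≤ Phi (m + 2) →
    (fibWord (m+1) ++ fibWord m).getD i false = (fibWord m ++ fibWord (m+1)).getD i false := by
  induction m with
  | zero =>
    intro i hi
    have hi' : i + 3 ≤ Phi 2 := hi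
    have h2 : Phi 2 = 3 := rfl
    have : i = 0 := by omega
    subst this; decide
  | succ m ih =>
    intro i hi
    have hi' : i + 3 ≤ Phi (m+3) := hi
    have hPhi : Phi (m+3) = Phi (m+2) + Phi (m+1) := Phi_add (m+1)
    have hA : (fibWord (m+1)).length = Phi (m+1) := rfl
    show ((fibWord (m+1) ++ fibWord m) ++ fibWord (m+1)).getD i false =
        (fibWord (m+1) ++ (fibWord (m+1) ++ fibWord m)).getD i false
    rw [List.append_assoc]
    rcases Nat.lt_or_ge i (Phi (m+1)) with h | h
    · rw [List.getD_append (fibWord (m+1)) (fibWord m ++ fibWord (m+1)) false i (by rw [hA]; exact h),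
        List.getD_append (fibWord (m+1)) (fibWord (m+1) ++ fibWord m) false i (by rw [hA]; exact h)]
    · have hL : (fibWord (m+1) ++ (fibWord m ++ fibWord (m+1))).getD i false
          = (fibWord m ++ fibWord (m+1)).getD (i - Phi (m+1)) false := by
        rw [List.getD_append_right (fibWord (m+1)) (fibWord m ++ fibWord (m+1)) false i
          (by rw [hA]; exact h), hA]
      have hR : (fibWord (m+1) ++ (fibWord (m+1) ++ fibWord m)).getD i false
          = (fibWord (m+1) ++ fibWord m).getD (i - Phi (m+1)) false := by
        rw [List.getD_append_right (fibWord (m+1)) (fibWord (m+1) ++ fibWord m) false i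
          (by rw [hA]; exact h), hA]
      rw [hL, hR]
      exact (ih _ (by omega)).symm

/-- Periodicity: `F_∞` has period `Φ_m` on its prefix of length `Φ_{m+2} - 2`. -/
lemma fib_per {m i : ℕ} (h : i + Phi m + 3 ≤ Phi (m + 2)) :
    fibInf (i + Phi m) = fibInf i := by
  have hx : i + Phi m < Phi (m+2) := by omega
  have hi1 : i < Phi (m+1) := by have := Phi_add m; omega
  rw [fibInf_eq_getD hx, fibInf_eq_getD hi1]
  show (fibWord (m+1) ++ fibWord m).getD (i + Phi m) false = _
  rw [fib_comm m _ (by omega),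
    List.getD_append_right _ _ _ _ (by rw [length_fibWord]; omega), length_fibWord]
  congr 1
  omega

/-- The second-to-last letter of `F_{k+1}`. -/
lemma fib_secondlast : ∀ k, fibInf (Phi (k+1) - 2) = decide ((k+1) % 2 = 0) := by
  intro k
  induction k using Nat.strong_induction_on with
  | _ k ih =>
  match k with
  | 0 => decide
  | 1 => decide
  | (k+2) =>
    have h2 : 2 ≤ Phi (k+1) := two_le_Phi_succ k
    have h3 : Phi (k+3) = Phi (k+2) + Phi (k+1) := Phi_add (k+1)
    have h4 : Phi (k+2) = Phi (k+1) + Phi k := Phi_add k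
    have hlt : Phi (k+3) - 2 < Phi (k+3) := by have := Phi_pos (k+3); omega
    rw [fibInf_eq_getD hlt]
    show (fibWord (k+2) ++ fibWord (k+1)).getD _ false = _
    rw [List.getD_append_right _ _ _ _ (by rw [length_fibWord]; omega), length_fibWord]
    have he : Phi (k+3) - 2 - Phi (k+2) = Phi (k+1) - 2 := by omega
    rw [he, ← fibInf_eq_getD (by omega), ih k (by omega)]
    have hp : (k+1) % 2 = (k+3) % 2 := by omega
    rw [hp]

/-! ### Zeckendorf decompositions -/

/-- Value of a list of Fibonacci indices. -/
def zval (l : List ℕ) : ℕ := (l.map Phi).sum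

/-- Last element of `h :: l`. -/
def zlast : ℕ → List ℕ → ℕ
  | h, [] => h
  | _, a :: l => zlast a l

lemma zval_cons (a : ℕ) (l : List ℕ) : zval (a :: l) = Phi a + zval l := by simp [zval]

lemma zlast_le : ∀ (l : List ℕ) (h : ℕ), (h :: l).Chain' (fun a b => b + 2 ≤ a) →
    zlast h l ≤ h := by
  intro l
  induction l with
  | nil => intro h _; exact le_rfl
  | cons a l ih =>
    intro h hc
    replace hc := List.isChain_cons_cons.mp hc
    exact le_trans (ih a hc.2) (by omega)

lemma zk_bound : ∀ (l : List ℕ) (h : ℕ), (h :: l).Chain' (fun a b => b + 2 ≤ a) →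
    Phi (zlast h l - 1) + zval (h :: l) ≤ Phi (h + 1) := by
  intro l
  induction l with
  | nil =>
    intro h _
    have h1 := Phi_pred_add h
    have h2 : zval [h] = Phi h := by simp [zval]
    show Phi (zlast h [] - 1) + zval [h] ≤ Phi (h + 1)
    have h3 : zlast h [] = h := rfl
    rw [h3]
    omega
  | cons a l ih =>
    intro h hc
    replace hc := List.isChain_cons_cons.mp hc
    have hb := ih a hc.2
    have h1 : Phi (a + 1) ≤ Phi (h - 1) := Phi_le_of_le (by omega)
    have h2 := Phi_pred_add h
    have : zlast h (a :: l) = zlast a l := rfl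
    rw [this, zval_cons]
    omega

lemma zk_nonocc : ∀ (l : List ℕ) (h : ℕ), (h :: l).Chain' (fun a b => b + 2 ≤ a) →
    fibInf (zval (h :: l) + Phi (zlast h l + 1) - 2) ≠ fibInf (Phi (zlast h l + 1) - 2) := by
  intro l
  induction l with
  | nil =>
    intro h _
    have e0 : zval [h] = Phi h := by simp [zval]
    have e1 : zval [h] + Phi (zlast h [] + 1) - 2 = Phi (h + 2) - 2 := by
      have := Phi_add h; simp only [zlast, e0]; omega
    have e2 : zlast h [] = h := rfl
    rw [e1, e2]
    have g1 : fibInf (Phi (h + 2) - 2) = decide ((h + 2) % 2 = 0) := fib_secondlast (h + 1)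
    have g2 : fibInf (Phi (h + 1) - 2) = decide ((h + 1) % 2 = 0) := fib_secondlast h
    rw [g1, g2, Ne, decide_eq_decide]
    omega
  | cons a l ih =>
    intro h hc
    replace hc := List.isChain_cons_cons.mp hc
    obtain ⟨hah, hc2⟩ := hc
    obtain ⟨h', rfl⟩ : ∃ h', h = h' + 2 := ⟨h - 2, by omega⟩
    have hta : zlast a l ≤ a := zlast_le l a hc2
    have hb := zk_bound l a hc2
    have hlast : zlast (h' + 2) (a :: l) = zlast a l := rfl
    have hzv : zval ((h' + 2) :: a :: l) = Phi (h' + 2) + zval (a :: l) := zval_cons _ _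
    have h2t : 2 ≤ Phi (zlast a l + 1) := two_le_Phi_succ _
    have hPt : Phi (zlast a l - 1) + Phi (zlast a l) = Phi (zlast a l + 1) := Phi_pred_add _
    have hm1 : Phi (a + 1) ≤ Phi (h' + 1) := Phi_le_of_le (by omega)
    have hm2 : Phi (zlast a l) ≤ Phi h' := Phi_le_of_le (by omega)
    have hmono : Phi h' < Phi (h' + 2) := Phi_strictMono (by omega)
    have hP2 : Phi (h' + 2) = Phi (h' + 1) + Phi h' := Phi_add h'
    have hP3 : Phi (h' + 3) = Phi (h' + 2) + Phi (h' + 1) := Phi_add (h' + 1)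
    have hP4 : Phi (h' + 2 + 2) = Phi (h' + 3) + Phi (h' + 2) := Phi_add (h' + 2)
    have hper : fibInf ((zval (a :: l) + Phi (zlast a l + 1) - 2) + Phi (h' + 2)) =
        fibInf (zval (a :: l) + Phi (zlast a l + 1) - 2) := fib_per (by omega)
    have heq : zval ((h' + 2) :: a :: l) + Phi (zlast (h' + 2) (a :: l) + 1) - 2 =
        (zval (a :: l) + Phi (zlast a l + 1) - 2) + Phi (h' + 2) := by rw [hlast]; omega
    rw [heq, hlast, hper]
    exact ih a hc2

lemma ex_top : ∀ n : ℕ, 1 ≤ n → ∃ h, Phi h ≤ n ∧ n < Phi (h + 1) := by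
  intro n hn
  induction n with
  | zero => omega
  | succ n ih =>
    rcases Nat.eq_zero_or_pos n with rfl | hp
    · exact ⟨0, by simp [Phi_zero], by simp [Phi_one]⟩
    · obtain ⟨h, h1, h2⟩ := ih hp
      rcases Nat.lt_or_ge (n + 1) (Phi (h + 1)) with h3 | h3
      · exact ⟨h, by omega, h3⟩
      · exact ⟨h + 1, h3, by have := Phi_lt_succ (h + 1); omega⟩

lemma zeck_ex : ∀ n : ℕ, 1 ≤ n → ∃ h l, (h :: l).Chain' (fun a b => b + 2 ≤ a) ∧
    zval (h :: l) = n ∧ n < Phi (h + 1) := by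
  intro n
  induction n using Nat.strong_induction_on with
  | _ n ihn =>
  intro hn
  obtain ⟨h, h1, h2⟩ := ex_top n hn
  rcases Nat.eq_zero_or_pos (n - Phi h) with hr | hr
  · exact ⟨h, [], List.isChain_singleton h, by simp [zval]; omega, h2⟩
  · have hh : 1 ≤ h := by
      by_contra hcon
      have hz : h = 0 := by omega
      subst hz
      have e1 : Phi (0 + 1) = 2 := rfl
      have e0 : Phi 0 = 1 := rfl
      omega
    obtain ⟨h', rfl⟩ : ∃ h', h = h' + 1 := ⟨h - 1, by omega⟩
    have hPhi : Phi (h' + 2) = Phi (h' + 1) + Phi h' := Phi_add h'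
    have h2' : n < Phi (h' + 2) := h2
    obtain ⟨a, l, hc, hv, hlt⟩ := ihn (n - Phi (h' + 1)) (by have := Phi_pos (h' + 1); omega) hr
    have hPa : Phi a ≤ n - Phi (h' + 1) := by rw [← hv, zval_cons]; omega
    have ha : a < h' := by
      have : Phi a < Phi h' := by omega
      exact Phi_strictMono.lt_iff_lt.mp this
    refine ⟨h' + 1, a :: l, List.isChain_cons_cons.mpr ⟨by omega, hc⟩, ?_, h2⟩
    rw [zval_cons, hv]
    omega

/-! ### Borders of prefixes of the Fibonacci word -/

lemma length_fibPrefix (n : ℕ) : (fibPrefix n).length = n := by simp [fibPrefix]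

lemma take_fibPrefix {j n : ℕ} (h : j ≤ n) : (fibPrefix n).take j = fibPrefix j := by
  unfold fibPrefix
  rw [← List.map_take, List.take_range, min_eq_left h]

lemma getElem_fibPrefix {n i : ℕ} (h : i < (fibPrefix n).length) :
    (fibPrefix n)[i] = fibInf i := by
  simp [fibPrefix]

lemma border_iff {n j : ℕ} (h : j ≤ n) :
    (fibPrefix n).take j <:+ fibPrefix n ↔ ∀ i, i < j → fibInf (n - j + i) = fibInf i := by
  rw [take_fibPrefix h, List.suffix_iff_eq_drop, length_fibPrefix, length_fibPrefix]
  constructor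
  · intro he i hi
    have h1 : i < (fibPrefix j).length := by rw [length_fibPrefix]; exact hi
    have h2 : (fibPrefix j)[i] = ((fibPrefix n).drop (n - j))[i]'(by
      rw [List.length_drop, length_fibPrefix]; omega) := by
      exact List.getElem_of_eq he h1
    rw [getElem_fibPrefix h1] at h2
    rw [List.getElem_drop, getElem_fibPrefix] at h2
    exact h2.symm
  · intro hp
    apply List.ext_getElem
    · rw [List.length_drop, length_fibPrefix, length_fibPrefix]; omega
    · intro i h1 h2
      rw [getElem_fibPrefix h1, List.getElem_drop, getElem_fibPrefix]
      exact (hp i (by rw [length_fibPrefix] at h1; exact h1)).symm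

/-! ### Bounds on Fibonacci values of words -/

lemma fibVal_lt : ∀ (w : List Bool), w.Chain' (fun a b => ¬(a = true ∧ b = true)) →
    fibVal w < Phi w.length
  | [], _ => by simp [fibVal]; exact Phi_pos 0
  | false :: v, hc => by
    have ih := fibVal_lt v hc.tail
    have h1 : fibVal (false :: v) = fibVal v := by simp [fibVal]
    have h2 := Phi_lt_succ v.length
    simp only [List.length_cons]
    omega
  | true :: [], _ => by
    have h1 : fibVal [true] = 1 := by simp [fibVal, Phi_zero]
    have h2 : Phi ([true] : List Bool).length = 2 := rfl
    omega
  | true :: true :: u, hc => by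
    exact absurd (List.isChain_cons_cons.mp hc).1 (by simp)
  | true :: false :: u, hc => by
    have ih := fibVal_lt u (hc.tail.tail)
    have h1 : fibVal (true :: false :: u) = Phi (u.length + 1) + fibVal u := by
      simp [fibVal]
    have h2 : Phi (u.length + 1 + 1) = Phi (u.length + 1) + Phi u.length := Phi_add _
    simp only [List.length_cons, h1]
    omega

lemma fibVal_head_lt {α : List Bool} (hc : α.Chain' (fun a b => ¬(a = true ∧ b = true)))
    (hh : α = [] ∨ α.head? = some false) : fibVal α < Phi (α.length - 1) := by
  rcases hh with rfl | hh
  · simp [fibVal]; exact Phi_pos _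
  · match α with
    | [] => simp at hh
    | true :: v => simp at hh
    | false :: v =>
      have ih := fibVal_lt v hc.tail
      have h1 : fibVal (false :: v) = fibVal v := by simp [fibVal]
      simp only [List.length_cons, h1]
      simpa using ih

/-! ### The master lemma computing the longest short border -/

lemma sb_eq {n s pstar : ℕ} (hps : pstar + s = n) (h2s : 2 * s < n)
    (hborder : ∀ i, i < s → fibInf (pstar + i) = fibInf i)
    (hmax : ∀ p h l, 1 ≤ p → p < pstar → n < 2 * p →
      (h :: l).Chain' (fun a b => b + 2 ≤ a) → zval (h :: l) = p →
      Phi (zlast h l + 1) - 1 ≤ n - p) :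
    shortBordLen (fibPrefix n) = s := by
  have hn : 0 < n := by omega
  have hsn : s ≤ n := by omega
  have hub : ∀ j ∈ {j | (fibPrefix n).take j <:+ fibPrefix n ∧ 2 * j < (fibPrefix n).length},
      j ≤ s := by
    intro j hj
    obtain ⟨hsuf, hlen⟩ := hj
    rw [length_fibPrefix] at hlen
    by_contra hcon
    push_neg at hcon
    set p := n - j with hp
    have hp1 : 1 ≤ p := by omega
    have hp2 : p < pstar := by omega
    have hp3 : n < 2 * p := by omega
    obtain ⟨h, l, hc, hv, -⟩ := zeck_ex p hp1
    have hj2 : Phi (zlast h l + 1) - 1 ≤ j := by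
      have := hmax p h l hp1 hp2 hp3 hc hv
      omega
    have h2t : 2 ≤ Phi (zlast h l + 1) := two_le_Phi_succ _
    have hmm := (border_iff (show j ≤ n by omega)).mp hsuf (Phi (zlast h l + 1) - 2) (by omega)
    have heq : n - j + (Phi (zlast h l + 1) - 2) = zval (h :: l) + Phi (zlast h l + 1) - 2 := by
      omega
    rw [heq] at hmm
    exact zk_nonocc l h hc hmm
  have hmem : s ∈ {j | (fibPrefix n).take j <:+ fibPrefix n ∧ 2 * j < (fibPrefix n).length} := by
    constructor
    · rw [border_iff hsn]
      intro i hi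
      have : n - s + i = pstar + i := by omega
      rw [this]
      exact hborder i hi
    · rw [length_fibPrefix]; exact h2s
  unfold shortBordLen
  exact le_antisymm (csSup_le ⟨s, hmem⟩ hub) (le_csSup ⟨s, hub⟩ hmem)

/-! ### Auxiliary `fibVal` facts -/

lemma fibVal_cons_true (v : List Bool) : fibVal (true :: v) = Phi v.length + fibVal v := by
  simp [fibVal]

lemma fibVal_cons_false (v : List Bool) : fibVal (false :: v) = fibVal v := by
  simp [fibVal]

lemma head_false_of_chain {α : List Bool}
    (hc : (true :: α).Chain' (fun a b => ¬(a = true ∧ b = true))) :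
    α = [] ∨ α.head? = some false := by
  match α with
  | [] => exact Or.inl rfl
  | b :: v =>
    right
    have := (List.isChain_cons_cons.mp hc).1
    cases b
    · rfl
    · simp at this

/-! ### The three cases -/

lemma sb_case1 {α : List Bool} (hcα : α.Chain' (fun a b => ¬(a = true ∧ b = true)))
    (hh : α = [] ∨ α.head? = some false) :
    shortBordLen (fibPrefix (Phi (α.length + 2) + (Phi α.length + fibVal α)))
      = Phi α.length + fibVal α := by
  set L := α.length with hL
  set a := fibVal α with ha'
  have ha : a < Phi (L - 1) := fibVal_head_lt hcα hh
  have hPL : Phi (L + 2) = Phi (L + 1) + Phi L := Phi_add L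
  have hPp : Phi (L - 1) + Phi L = Phi (L + 1) := Phi_pred_add L
  apply sb_eq rfl
  · -- 2s < n
    omega
  · -- border
    intro i hi
    rw [Nat.add_comm]
    apply fib_per
    have hP4 : Phi (L + 2 + 2) = Phi (L + 3) + Phi (L + 2) := Phi_add (L + 2)
    have hP3 : Phi (L + 3) = Phi (L + 2) + Phi (L + 1) := Phi_add (L + 1)
    have := Phi_pos (L + 2)
    omega
  · -- maximality
    intro p h l hp1 hp2 hp3 hc hv
    have hPh : Phi h ≤ p := by rw [← hv, zval_cons]; omega
    have hhL : h ≤ L + 1 := by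
      by_contra hcon
      have : Phi (L + 2) ≤ Phi h := Phi_le_of_le (by omega)
      omega
    match l with
    | [] =>
      have hpv : p = Phi h := by rw [← hv]; simp [zval]
      have ht : zlast h [] = h := rfl
      rw [ht]
      rcases Nat.lt_or_ge h (L + 1) with hhl | hhl
      · have h1 : Phi (h + 1) ≤ Phi (L + 1) := Phi_le_of_le (by omega)
        have h2 : Phi (h + 1 + 1) = Phi (h + 1) + Phi h := Phi_add h
        have h3 : Phi (h + 1 + 1) ≤ Phi (L + 2) := Phi_le_of_le (by omega)
        omega
      · -- h = L + 1 : contradiction with n < 2p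
        have hh1 : h = L + 1 := by omega
        subst hh1
        exfalso
        have hm0 : Phi (L - 1) ≤ Phi L := Phi_le_of_le (by omega)
        have hv' : p = Phi (L + 1) := by rw [← hv]; simp [zval]
        omega
    | a' :: l' =>
      have ht : zlast h (a' :: l') = zlast a' l' := rfl
      replace hc := List.isChain_cons_cons.mp hc
      have hta : zlast a' l' ≤ a' := zlast_le l' a' hc.2
      have hb := zk_bound (a' :: l') h (List.isChain_cons_cons.mpr hc)
      rw [hv] at hb
      have hht : zlast h (a' :: l') + 2 ≤ h := by rw [ht]; omega
      have h1 : Phi (h + 1) ≤ Phi (L + 2) := Phi_le_of_le (by omega)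
      have h2 : Phi (zlast a' l') ≤ Phi L := Phi_le_of_le (by omega)
      have h3 : Phi (zlast a' l' - 1) + Phi (zlast a' l') = Phi (zlast a' l' + 1) :=
        Phi_pred_add _
      rw [ht]
      have hb' : Phi (zlast a' l' - 1) + p ≤ Phi (h + 1) := by
        have e : zlast h (a' :: l') = zlast a' l' := rfl
        rw [e] at hb; exact hb
      omega

lemma sb_case2 {α : List Bool} (hcα : α.Chain' (fun a b => ¬(a = true ∧ b = true)))
    (hh : α = [] ∨ α.head? = some false) :
    shortBordLen (fibPrefix (Phi (α.length + 3) + (Phi α.length + fibVal α)))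
      = Phi α.length + fibVal α := by
  set L := α.length with hL
  set a := fibVal α with ha'
  have ha : a < Phi (L - 1) := fibVal_head_lt hcα hh
  have hPL : Phi (L + 2) = Phi (L + 1) + Phi L := Phi_add L
  have hPL3 : Phi (L + 3) = Phi (L + 2) + Phi (L + 1) := Phi_add (L + 1)
  have hPp : Phi (L - 1) + Phi L = Phi (L + 1) := Phi_pred_add L
  apply sb_eq rfl
  · omega
  · intro i hi
    rw [Nat.add_comm]
    apply fib_per
    have hP5 : Phi (L + 3 + 2) = Phi (L + 4) + Phi (L + 3) := Phi_add (L + 3)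
    have hP4 : Phi (L + 4) = Phi (L + 3) + Phi (L + 2) := Phi_add (L + 2)
    have := Phi_pos (L + 3)
    omega
  · intro p h l hp1 hp2 hp3 hc hv
    have hPh : Phi h ≤ p := by rw [← hv, zval_cons]; omega
    have hhL : h ≤ L + 2 := by
      by_contra hcon
      have : Phi (L + 3) ≤ Phi h := Phi_le_of_le (by omega)
      omega
    match l with
    | [] =>
      have hpv : p = Phi h := by rw [← hv]; simp [zval]
      have ht : zlast h [] = h := rfl
      rw [ht]
      rcases Nat.lt_or_ge h (L + 2) with hhl | hhl
      · have h1 : Phi (h + 1) ≤ Phi (L + 2) := Phi_le_of_le (by omega)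
        have h2 : Phi (h + 1 + 1) = Phi (h + 1) + Phi h := Phi_add h
        have h3 : Phi (h + 1 + 1) ≤ Phi (L + 3) := Phi_le_of_le (by omega)
        omega
      · have hh1 : h = L + 2 := by omega
        subst hh1
        exfalso
        have hv' : p = Phi (L + 2) := by rw [← hv]; simp [zval]
        omega
    | a' :: l' =>
      have ht : zlast h (a' :: l') = zlast a' l' := rfl
      replace hc := List.isChain_cons_cons.mp hc
      have hta : zlast a' l' ≤ a' := zlast_le l' a' hc.2
      have hb := zk_bound (a' :: l') h (List.isChain_cons_cons.mpr hc)
      rw [hv] at hb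
      have h1 : Phi (h + 1) ≤ Phi (L + 3) := Phi_le_of_le (by omega)
      have h2 : Phi (zlast a' l') ≤ Phi L := Phi_le_of_le (by omega)
      have h3 : Phi (zlast a' l' - 1) + Phi (zlast a' l') = Phi (zlast a' l' + 1) :=
        Phi_pred_add _
      rw [ht]
      have hb' : Phi (zlast a' l' - 1) + p ≤ Phi (h + 1) := by
        have e : zlast h (a' :: l') = zlast a' l' := rfl
        rw [e] at hb; exact hb
      omega

lemma sb_case3 {α : List Bool} (hcα : α.Chain' (fun a b => ¬(a = true ∧ b = true)))
    (hh : α = [] ∨ α.head? = some false) :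
    shortBordLen (fibPrefix (Phi (α.length + 2) + fibVal α)) = Phi α.length + fibVal α := by
  set L := α.length with hL
  set a := fibVal α with ha'
  have ha : a < Phi (L - 1) := fibVal_head_lt hcα hh
  have hPL : Phi (L + 2) = Phi (L + 1) + Phi L := Phi_add L
  have hPp : Phi (L - 1) + Phi L = Phi (L + 1) := Phi_pred_add L
  apply sb_eq (pstar := Phi (L + 1)) (by omega)
  · omega
  · intro i hi
    rw [Nat.add_comm]
    apply fib_per
    have hP3 : Phi (L + 1 + 2) = Phi (L + 2) + Phi (L + 1) := Phi_add (L + 1)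
    have hstep : Phi (L + 1) < Phi (L + 2) := Phi_lt_succ (L + 1)
    omega
  · intro p h l hp1 hp2 hp3 hc hv
    have hPh : Phi h ≤ p := by rw [← hv, zval_cons]; omega
    have hhL : h ≤ L := by
      by_contra hcon
      have : Phi (L + 1) ≤ Phi h := Phi_le_of_le (by omega)
      omega
    match l with
    | [] =>
      have hpv : p = Phi h := by rw [← hv]; simp [zval]
      have ht : zlast h [] = h := rfl
      rw [ht]
      have h1 : Phi (h + 1) ≤ Phi (L + 1) := Phi_le_of_le (by omega)
      have h2 : Phi (h + 1 + 1) = Phi (h + 1) + Phi h := Phi_add h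
      have h3 : Phi (h + 1 + 1) ≤ Phi (L + 2) := Phi_le_of_le (by omega)
      omega
    | a' :: l' =>
      have ht : zlast h (a' :: l') = zlast a' l' := rfl
      replace hc := List.isChain_cons_cons.mp hc
      have hta : zlast a' l' ≤ a' := zlast_le l' a' hc.2
      have hb := zk_bound (a' :: l') h (List.isChain_cons_cons.mpr hc)
      rw [hv] at hb
      have h1 : Phi (h + 1) ≤ Phi (L + 1) := Phi_le_of_le (by omega)
      have h2 : Phi (zlast a' l') ≤ Phi L := Phi_le_of_le (by omega)
      have h3 : Phi (zlast a' l' - 1) + Phi (zlast a' l') = Phi (zlast a' l' + 1) :=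
        Phi_pred_add _
      rw [ht]
      have hb' : Phi (zlast a' l' - 1) + p ≤ Phi (h + 1) := by
        have e : zlast h (a' :: l') = zlast a' l' := rfl
        rw [e] at hb; exact hb
      omega

/-! ### Disjointness of the three cases -/

lemma disj12 (w : List Bool) : ¬((∃ α, w = [true, false, true] ++ α) ∧
    (∃ α, w = [true, false, false, true] ++ α)) := by
  rintro ⟨⟨a1, rfl⟩, ⟨a2, h⟩⟩; simp at h

lemma disj13 (w : List Bool) : ¬((∃ α, w = [true, false, true] ++ α) ∧
    (∃ α, (α = [] ∨ α.head? = some false) ∧ w = [true, false, false] ++ α)) := by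
  rintro ⟨⟨a1, rfl⟩, ⟨a2, hc, h⟩⟩; simp at h

lemma disj23 (w : List Bool) : ¬((∃ α, w = [true, false, false, true] ++ α) ∧
    (∃ α, (α = [] ∨ α.head? = some false) ∧ w = [true, false, false] ++ α)) := by
  rintro ⟨⟨a1, rfl⟩, ⟨a2, hc, h⟩⟩
  simp only [List.cons_append, List.cons.injEq, true_and, List.nil_append] at h
  rcases hc with rfl | hc
  · simp at h
  · rw [← h] at hc; simp at hc
/-- Lemma 3: for `n ≥ 3` with Fibonacci representation `w`, exactly one of the
following holds: `w = 101α`, `w = 1001α`, or `w = 100α` with `α` empty or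
beginning with `0`; and in each case `SB[n] = (1α)_Fib`, where `SB[n]` is the
length of the longest short border of `F_∞[1..n]`. -/
theorem shortBordLen_fib_of_fibRep (n : ℕ) (hn : 3 ≤ n) (w : List Bool)
    (hw : IsFibRep n w) :
    ((∃ α, w = [true, false, true] ++ α) ∨
     (∃ α, w = [true, false, false, true] ++ α) ∨
     (∃ α, (α = [] ∨ α.head? = some false) ∧ w = [true, false, false] ++ α)) ∧
    ¬((∃ α, w = [true, false, true] ++ α) ∧
      (∃ α, w = [true, false, false, true] ++ α)) ∧
    ¬((∃ α, w = [true, false, true] ++ α) ∧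
      (∃ α, (α = [] ∨ α.head? = some false) ∧ w = [true, false, false] ++ α)) ∧
    ¬((∃ α, w = [true, false, false, true] ++ α) ∧
      (∃ α, (α = [] ∨ α.head? = some false) ∧ w = [true, false, false] ++ α)) ∧
    (∀ α, w = [true, false, true] ++ α →
        shortBordLen (fibPrefix n) = fibVal (true :: α)) ∧
    (∀ α, w = [true, false, false, true] ++ α →
        shortBordLen (fibPrefix n) = fibVal (true :: α)) ∧
    (∀ α, (α = [] ∨ α.head? = some false) → w = [true, false, false] ++ α →
        shortBordLen (fibPrefix n) = fibVal (true :: α)) := by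

  obtain ⟨hhead, hchain, hval⟩ := hw
  match w, hhead, hchain, hval with
  | [], hhead, _, _ => simp at hhead
  | (b :: w1), hhead, hchain, hval =>
  have hb : b = true := by simpa using hhead
  subst hb
  match w1, hchain, hval with
  | [], _, hval =>
    exfalso
    have : fibVal [true] = 1 := by simp [fibVal, Phi_zero]
    omega
  | (true :: w2), hchain, _ =>
    exact absurd (List.isChain_cons_cons.mp hchain).1 (by simp)
  | (false :: w2), hchain, hval =>
  match w2, hchain, hval with
  | [], _, hval =>
    exfalso
    have : fibVal [true, false] = 2 := by simp [fibVal]; rfl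
    omega
  | (true :: α₀), hchain, hval =>
    -- Case 1 : w = 101 α₀
    have hcα : α₀.Chain' (fun a b => ¬(a = true ∧ b = true)) := hchain.tail.tail.tail
    have hhα : α₀ = [] ∨ α₀.head? = some false :=
      head_false_of_chain (hchain.tail.tail)
    have hv3 : fibVal (true :: false :: true :: α₀)
        = Phi (α₀.length + 2) + (Phi α₀.length + fibVal α₀) := by
      rw [fibVal_cons_true, fibVal_cons_false, fibVal_cons_true]
      rfl
    have hn2 : n = Phi (α₀.length + 2) + (Phi α₀.length + fibVal α₀) := by
      rw [← hval]; exact hv3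
    refine ⟨Or.inl ⟨α₀, rfl⟩, disj12 _, disj13 _, disj23 _, ?_, ?_, ?_⟩
    · intro α heq
      have : α = α₀ := by simpa using heq.symm
      subst this
      rw [hn2, fibVal_cons_true]
      exact sb_case1 hcα hhα
    · intro α heq; simp at heq
    · intro α _ heq; simp at heq
  | (false :: w3), hchain, hval =>
  match w3, hchain, hval with
  | (true :: α₀), hchain, hval =>
    -- Case 2 : w = 1001 α₀
    have hcα : α₀.Chain' (fun a b => ¬(a = true ∧ b = true)) :=
      hchain.tail.tail.tail.tail
    have hhα : α₀ = [] ∨ α₀.head? = some false :=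
      head_false_of_chain (hchain.tail.tail.tail)
    have hv3 : fibVal (true :: false :: false :: true :: α₀)
        = Phi (α₀.length + 3) + (Phi α₀.length + fibVal α₀) := by
      rw [fibVal_cons_true, fibVal_cons_false, fibVal_cons_false, fibVal_cons_true]
      rfl
    have hn2 : n = Phi (α₀.length + 3) + (Phi α₀.length + fibVal α₀) := by
      rw [← hval]; exact hv3
    refine ⟨Or.inr (Or.inl ⟨α₀, rfl⟩), disj12 _, disj13 _, disj23 _, ?_, ?_, ?_⟩
    · intro α heq; simp at heq
    · intro α heq
      have : α = α₀ := by simpa using heq.symm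
      subst this
      rw [hn2, fibVal_cons_true]
      exact sb_case2 hcα hhα
    · intro α hcond heq
      have : α = true :: α₀ := by simpa using heq.symm
      subst this
      rcases hcond with h | h <;> simp at h
  | [], _, hval =>
    -- Case 3 with α = []
    have hn2 : n = Phi 2 := by
      rw [← hval]; simp [fibVal]
    refine ⟨Or.inr (Or.inr ⟨[], Or.inl rfl, rfl⟩), disj12 _, disj13 _, disj23 _, ?_, ?_, ?_⟩
    · intro α heq; simp at heq
    · intro α heq; simp at heq
    · intro α _ heq
      have : α = ([] : List Bool) := by simpa using heq.symm
      subst this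
      have h3 : shortBordLen (fibPrefix (Phi (([] : List Bool).length + 2) + fibVal ([] : List Bool)))
          = Phi ([] : List Bool).length + fibVal ([] : List Bool) :=
        sb_case3 List.isChain_nil (Or.inl rfl)
      simp only [List.length_nil] at h3
      have e1 : Phi (0 + 2) + fibVal ([] : List Bool) = Phi 2 := by simp [fibVal]
      rw [e1] at h3
      rw [hn2, fibVal_cons_true]
      simpa using h3
  | (false :: α₁), hchain, hval =>
    -- Case 3 with α = false :: α₁
    have hcα : (false :: α₁).Chain' (fun a b => ¬(a = true ∧ b = true)) :=
      hchain.tail.tail.tail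
    have hhα : (false :: α₁ : List Bool) = [] ∨ (false :: α₁ : List Bool).head? = some false :=
      Or.inr rfl
    have hv3 : fibVal (true :: false :: false :: false :: α₁)
        = Phi ((false :: α₁ : List Bool).length + 2) + fibVal (false :: α₁) := by
      rw [fibVal_cons_true, fibVal_cons_false, fibVal_cons_false]
      rfl
    have hn2 : n = Phi ((false :: α₁ : List Bool).length + 2) + fibVal (false :: α₁) := by
      rw [← hval]; exact hv3
    refine ⟨Or.inr (Or.inr ⟨false :: α₁, Or.inr rfl, rfl⟩), disj12 _, disj13 _, disj23 _,
      ?_, ?_, ?_⟩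
    · intro α heq; simp at heq
    · intro α heq; simp at heq
    · intro α _ heq
      have : α = false :: α₁ := by simpa using heq.symm
      subst this
      rw [hn2, fibVal_cons_true]
      exact sb_case3 hcα hhα
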